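/- Let A₁ be a positive-definite diagonal N×N matrix and K > 0. Suppose ζ, ã₁, ã₂ : ℝ → ℝᴺ satisfy A₁ζ̇ + Kζ = −μ diag(ã₁)v + 4T diag(ã₂)v, ã₁' = γ₁μ(v∘ζ), ã₂' = −4γ₂(v∘ζ∘T³) (componentwise products), where T = diag((T₂¹)³,…,(T₂ᴺ)³), γ₁, γ₂ > 0, μ > 0, and v, T₂ⁱ are arbitrary continuous functions. Then H(ζ, ã₁, ã₂) = ½ζᵀA₁ζ + ‖ã₁‖²/(2γ₁) + ‖ã₂‖²/(2γ₂) satisfies Ḣ = −K‖ζ‖² ≤ 0 along trajectories. -/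

import Mathlib

open Finset

/-- along trajectories of the adaptive closed-loop system, the
Lyapunov function `H = ½ζᵀA₁ζ + ‖ã₁‖²/(2γ₁) + ‖ã₂‖²/(2γ₂)` satisfies
`Ḣ = −K‖ζ‖² ≤ 0`.  Everything is written componentwise: `A₁` is the
(positive) diagonal of the matrix `A₁`, and `T = diag((T₂ⁱ)³)`. -/
theorem adaptive_lyapunov_derivative
    (N : ℕ) (A₁ : Fin N → ℝ) (hA₁ : ∀ i, 0 < A₁ i)
    (K μ γ₁ γ₂ : ℝ) (hK : 0 < K) (hμ : 0 < μ) (hγ₁ : 0 < γ₁) (hγ₂ : 0 < γ₂)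
    (ζ ζ' a₁ a₂ v T₂ : ℝ → Fin N → ℝ)
    (hvcont : ∀ i, Continuous fun t => v t i)
    (hTcont : ∀ i, Continuous fun t => T₂ t i)
    (hζ : ∀ t i, HasDerivAt (fun s => ζ s i) (ζ' t i) t)
    (hdyn : ∀ t i, A₁ i * ζ' t i + K * ζ t i =
        -μ * (a₁ t i * v t i) + 4 * ((T₂ t i) ^ 3 * (a₂ t i * v t i)))
    (ha₁ : ∀ t i, HasDerivAt (fun s => a₁ s i) (γ₁ * μ * (v t i * ζ t i)) t)
    (ha₂ : ∀ t i, HasDerivAt (fun s => a₂ s i)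
        (-(4 * γ₂) * (v t i * ζ t i * (T₂ t i) ^ 3)) t) :
    ∀ t, HasDerivAt
        (fun s => (1 / 2) * ∑ i, A₁ i * (ζ s i) ^ 2
          + (∑ i, (a₁ s i) ^ 2) / (2 * γ₁)
          + (∑ i, (a₂ s i) ^ 2) / (2 * γ₂))
        (-K * ∑ i, (ζ t i) ^ 2) t ∧ -K * ∑ i, (ζ t i) ^ 2 ≤ 0 := by
  intro t
  constructor
  · have h1 : HasDerivAt (fun s => (1 / 2) * ∑ i, A₁ i * (ζ s i) ^ 2)
        ((1 / 2) * ∑ i, A₁ i * (2 * ζ t i ^ 1 * ζ' t i)) t := by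
      apply HasDerivAt.const_mul
      apply HasDerivAt.fun_sum
      intro i _
      exact ((hζ t i).fun_pow 2).const_mul (A₁ i)
    have h2 : HasDerivAt (fun s => (∑ i, (a₁ s i) ^ 2) / (2 * γ₁))
        ((∑ i, 2 * a₁ t i ^ 1 * (γ₁ * μ * (v t i * ζ t i))) / (2 * γ₁)) t := by
      apply HasDerivAt.div_const
      exact HasDerivAt.fun_sum fun i _ => (ha₁ t i).fun_pow 2
    have h3 : HasDerivAt (fun s => (∑ i, (a₂ s i) ^ 2) / (2 * γ₂))
        ((∑ i, 2 * a₂ t i ^ 1 * (-(4 * γ₂) * (v t i * ζ t i * (T₂ t i) ^ 3))) / (2 * γ₂)) t := by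
      apply HasDerivAt.div_const
      exact HasDerivAt.fun_sum fun i _ => (ha₂ t i).fun_pow 2
    have h := (h1.fun_add h2).fun_add h3
    refine h.congr_deriv (Eq.symm ?_)
    rw [Finset.mul_sum, Finset.sum_div, Finset.sum_div, Finset.mul_sum,
      ← Finset.sum_add_distrib, ← Finset.sum_add_distrib]
    apply Finset.sum_congr rfl
    intro i _
    have hd := hdyn t i
    field_simp
    linear_combination (-(ζ t i)) * hd
  · have : (0:ℝ) ≤ ∑ i, (ζ t i) ^ 2 := Finset.sum_nonneg fun i _ => sq_nonneg _
    nlinarith
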